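/- Let f : E ⟶ X be a bundle scenario with X connected, F a summand of E, and p a simplicial distribution on f. Then for any two simplices x ∈ X_n and x' ∈ X_k, Σ_{e ∈ F_n} p_x(e) = Σ_{e ∈ F_k} p_{x'}(e). -/

import Mathlib

open CategoryTheory Simplicial Opposite
open scoped NNReal BigOperators

universe u

/-- A distribution on a type `S`: a finitely supported function to `ℝ≥0` with total sum 1. -/
structure FDist (S : Type u) : Type u where
  toFun : S → ℝ≥0
  finite_support : (Function.support toFun).Finite
  sum_one : ∑ᶠ s, toFun s = 1

/-- `f : E ⟶ X` is a bundle scenario if it is surjective in each degree. -/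
def IsBundle {E X : SSet.{u}} (f : E ⟶ X) : Prop :=
  ∀ n : ℕ, Function.Surjective (f.app (op ⦋n⦌))

/-- A simplicial distribution on a simplicial map `f : E ⟶ X`. -/
structure BDist {E X : SSet.{u}} (f : E ⟶ X) : Type u where
  d : ∀ n : ℕ, X _⦋n⦌ → FDist (E _⦋n⦌)
  supp : ∀ (n : ℕ) (x : X _⦋n⦌) (e : E _⦋n⦌), f.app (op ⦋n⦌) e ≠ x → (d n x).toFun e = 0
  compat : ∀ {k n : ℕ} (α : (⦋k⦌ : SimplexCategory) ⟶ ⦋n⦌) (x : X _⦋n⦌) (e : E _⦋k⦌),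
    (d k (X.map α.op x)).toFun e = ∑ᶠ e' ∈ {e' : E _⦋n⦌ | E.map α.op e' = e}, (d n x).toFun e'

/-- A family of levelwise subsets closed under the structure maps. -/
def ClosedUnder (E : SSet.{u}) (F : ∀ n : ℕ, Set (E _⦋n⦌)) : Prop :=
  ∀ ⦃k n : ℕ⦄ (α : (⦋k⦌ : SimplexCategory) ⟶ ⦋n⦌) (e : E _⦋n⦌), e ∈ F n → E.map α.op e ∈ F k

/-- A summand of a simplicial set: the family and its levelwise complement are both closed
under the structure maps. -/
def IsSummand (E : SSet.{u}) (F : ∀ n : ℕ, Set (E _⦋n⦌)) : Prop :=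
  ClosedUnder E F ∧ ClosedUnder E fun n => (F n)ᶜ

/-- The edge relation on vertices of a simplicial set. -/
def EdgeRel (X : SSet.{u}) (a b : X _⦋0⦌) : Prop :=
  ∃ σ : X _⦋1⦌, X.δ 1 σ = a ∧ X.δ 0 σ = b

/-- A simplicial set is connected if any two vertices are related by the equivalence
relation generated by the edge relation. -/
def SConnected (X : SSet.{u}) : Prop :=
  ∀ a b : X _⦋0⦌, Relation.EqvGen (EdgeRel X) a b

/-- The sub-simplicial set spanned by a closed family of levelwise subsets. -/
def SubSSet (E : SSet.{u}) (F : ∀ n : ℕ, Set (E _⦋n⦌)) (hF : ClosedUnder E F) : SSet.{u} where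
  obj U := {e : E.obj U // e ∈ F U.unop.len}
  map {U V} α := TypeCat.ofHom fun e => ⟨E.map α e.1, hF (k := V.unop.len) (n := U.unop.len) α.unop e.1 e.2⟩
  map_id U := by
    ext e
    exact ConcreteCategory.congr_hom (E.map_id U) e.1
  map_comp α β := by
    ext e
    exact ConcreteCategory.congr_hom (E.map_comp α β) e.1

/-- The inclusion of a sub-simplicial set. -/
def subIncl (E : SSet.{u}) (F : ∀ n : ℕ, Set (E _⦋n⦌)) (hF : ClosedUnder E F) :
    SubSSet E F hF ⟶ E where
  app U := TypeCat.ofHom fun e => e.1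
  naturality := by intros; rfl

/-- The sections of a simplicial map `f : E ⟶ X`. -/
def Sections {E X : SSet.{u}} (f : E ⟶ X) : Type u :=
  {s : X ⟶ E // s ≫ f = 𝟙 X}

/-- A simplicial distribution on a bundle is noncontextual if it is a mixture of
(deterministic distributions associated with) sections of the bundle. -/
def BNoncontextual {E X : SSet.{u}} {f : E ⟶ X} (p : BDist f) : Prop :=
  ∃ Q : FDist (Sections f), ∀ (n : ℕ) (x : X _⦋n⦌) (e : E _⦋n⦌),
    (p.d n x).toFun e = ∑ᶠ s ∈ ({s | s.1.app (op ⦋n⦌) x = e} : Set (Sections f)), Q.toFun s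

/-- A vertex (extreme point) of the convex set of simplicial distributions on a bundle. -/
def BIsVertex {E X : SSet.{u}} {f : E ⟶ X} (p : BDist f) : Prop :=
  ∀ (q q' : BDist f) (t : ℝ), 0 < t → t < 1 →
    (∀ (n : ℕ) (x : X _⦋n⦌) (e : E _⦋n⦌),
      ((p.d n x).toFun e : ℝ) = t * ((q.d n x).toFun e : ℝ) + (1 - t) * ((q'.d n x).toFun e : ℝ)) →
    q = q'

lemma finsum_fiberwise_aux {α β : Type*} (g : α → ℝ≥0) (hg : (Function.support g).Finite)
    (φ : α → β) (T : Set β) :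
    ∑ᶠ b ∈ T, ∑ᶠ a ∈ {a | φ a = b}, g a = ∑ᶠ a ∈ φ ⁻¹' T, g a := by
  classical
  set s := hg.toFinset with hs
  have hmem : ∀ a, a ∈ s ↔ g a ≠ 0 := by
    intro a; simp [hs, Function.mem_support]
  have hinner : ∀ b, ∑ᶠ a ∈ {a | φ a = b}, g a = ∑ a ∈ s.filter (fun a => φ a = b), g a := by
    intro b
    apply finsum_mem_eq_sum_of_inter_support_eq
    ext a
    simp only [Set.mem_inter_iff, Set.mem_setOf_eq, Finset.coe_filter, Function.mem_support,
      Finset.mem_coe, hmem]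
    tauto
  set t := (s.image φ).filter (· ∈ T) with ht
  have houter : ∑ᶠ b ∈ T, ∑ᶠ a ∈ {a | φ a = b}, g a
      = ∑ b ∈ t, ∑ᶠ a ∈ {a | φ a = b}, g a := by
    apply finsum_mem_eq_sum_of_inter_support_eq
    ext b
    simp only [Set.mem_inter_iff, Function.mem_support, ht, Finset.coe_filter,
      Set.mem_setOf_eq, Finset.mem_image]
    constructor
    · rintro ⟨hbT, hb⟩
      refine ⟨⟨?_, hbT⟩, hb⟩
      have h2 := hinner b
      simp only [Set.mem_setOf_eq] at h2
      rw [h2] at hb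
      obtain ⟨a, ha, -⟩ := Finset.exists_ne_zero_of_sum_ne_zero hb
      exact ⟨a, (Finset.mem_filter.1 ha).1, (Finset.mem_filter.1 ha).2⟩
    · rintro ⟨⟨-, hbT⟩, hb⟩; exact ⟨hbT, hb⟩
  have hrhs : ∑ᶠ a ∈ φ ⁻¹' T, g a = ∑ a ∈ s.filter (fun a => φ a ∈ T), g a := by
    apply finsum_mem_eq_sum_of_inter_support_eq
    ext a
    simp only [Set.mem_inter_iff, Set.mem_preimage, Finset.coe_filter, Function.mem_support,
      Finset.mem_coe, hmem, Set.mem_setOf_eq]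
    tauto
  rw [houter, hrhs]
  calc ∑ b ∈ t, ∑ᶠ a ∈ {a | φ a = b}, g a
      = ∑ b ∈ t, ∑ a ∈ s.filter (fun a => φ a = b), g a :=
        Finset.sum_congr rfl fun b _ => hinner b
    _ = ∑ a ∈ s.filter (fun a => φ a ∈ t), g a :=
        Finset.sum_fiberwise_eq_sum_filter s t φ g
    _ = ∑ a ∈ s.filter (fun a => φ a ∈ T), g a := by
        apply Finset.sum_congr _ fun _ _ => rfl
        apply Finset.filter_congr
        intro a ha
        simp only [ht, Finset.mem_filter, Finset.mem_image]
        exact ⟨fun h => h.2, fun h => ⟨⟨a, ha, rfl⟩, h⟩⟩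


/-- Lemma 3.11: for a bundle scenario over a connected measurement space, the total mass of
a simplicial distribution in a summand `F` of the event space does not depend on the
simplex. -/
theorem stmt4 {E X : SSet.{0}} (f : E ⟶ X) (hf : IsBundle f) (hX : SConnected X)
    (F : ∀ n : ℕ, Set (E _⦋n⦌)) (hF : IsSummand E F) (p : BDist f)
    (n k : ℕ) (x : X _⦋n⦌) (x' : X _⦋k⦌) :
    ∑ᶠ e ∈ F n, (p.d n x).toFun e = ∑ᶠ e ∈ F k, (p.d k x').toFun e := by
  set m : ∀ j : ℕ, X _⦋j⦌ → ℝ≥0 := fun j y => ∑ᶠ e ∈ F j, (p.d j y).toFun e with hm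
  have step : ∀ {j l : ℕ} (α : (⦋j⦌ : SimplexCategory) ⟶ ⦋l⦌) (y : X _⦋l⦌),
      m j (X.map α.op y) = m l y := by
    intro j l α y
    have hpre : (E.map α.op) ⁻¹' (F j) = F l := by
      ext e'
      constructor
      · intro h
        by_contra h'
        exact hF.2 α e' h' h
      · exact fun h => hF.1 α e' h
    calc m j (X.map α.op y)
        = ∑ᶠ e ∈ F j, ∑ᶠ e' ∈ {e' : E _⦋l⦌ | E.map α.op e' = e}, (p.d l y).toFun e' :=
          finsum_mem_congr rfl fun e _ => p.compat α y e
      _ = ∑ᶠ e' ∈ (E.map α.op) ⁻¹' (F j), (p.d l y).toFun e' :=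
          finsum_fiberwise_aux _ (p.d l y).finite_support _ _
      _ = m l y := by rw [hpre]
  have edge : ∀ a b : X _⦋0⦌, EdgeRel X a b → m 0 a = m 0 b := by
    rintro a b ⟨σ, h1, h0⟩
    have e1 : m 0 a = m 1 σ := by
      rw [← h1]; exact step (SimplexCategory.δ 1) σ
    have e0 : m 0 b = m 1 σ := by
      rw [← h0]; exact step (SimplexCategory.δ 0) σ
    rw [e1, e0]
  have vertEq : ∀ a b : X _⦋0⦌, m 0 a = m 0 b := by
    intro a b
    induction hX a b with
    | rel a b h => exact edge a b h
    | refl a => rfl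
    | symm a b _ ih => exact ih.symm
    | trans a b c _ _ ih1 ih2 => exact ih1.trans ih2
  have hx : m n x = m 0 (X.map (SimplexCategory.const ⦋0⦌ ⦋n⦌ 0).op x) :=
    (step (SimplexCategory.const ⦋0⦌ ⦋n⦌ 0) x).symm
  have hx' : m k x' = m 0 (X.map (SimplexCategory.const ⦋0⦌ ⦋k⦌ 0).op x') :=
    (step (SimplexCategory.const ⦋0⦌ ⦋k⦌ 0) x').symm
  show m n x = m k x'
  rw [hx, hx']
  exact vertEq _ _
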